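/- Let k be a field and X a type; in F := FreeLieAlgebra k (X ⊕ X), with plain generators x̄ and dotted generators ẋ, let φ : F → F be the unique Lie algebra homomorphism with φ(x̄) = x̄ and φ(ẋ) = x̄, and let V₂ be the smallest k-submodule of F containing all ẋ and closed under the two di-algebra operations (for a, b ∈ V₂: ⁅φ(a), b⁆ ∈ V₂ and ⁅a, φ(b)⁆ ∈ V₂). Let A be a k-module with a bilinear operation ⊢ satisfying the left Leibniz identity x ⊢ (y ⊢ z) = (x ⊢ y) ⊢ z + y ⊢ (x ⊢ z). Then for every map α : X → A there exists a unique k-linear map χ : V₂ → A such that χ(ẋ) = α(x) for all x ∈ X, and for all a, b ∈ V₂: χ(⁅φ(a), b⁆) = χ(a) ⊢ χ(b) and χ(⁅a, φ(b)⁆) = -(χ(b) ⊢ χ(a)). -/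

import Mathlib

namespace FreeLeibnizAux

variable {k A : Type*} [Field k] [AddCommGroup A] [Module k A]

attribute [local instance 100] LieRing.ofAssociativeRing
attribute [local instance 100] LieAlgebra.ofAssociativeAlgebra

/-- Semidirect product of `gl(A)` with the abelian Lie algebra `A`. -/
def Sd (k A : Type*) [Field k] [AddCommGroup A] [Module k A] := Module.End k A × A

instance : AddCommGroup (Sd k A) := inferInstanceAs (AddCommGroup (Module.End k A × A))
instance : Module k (Sd k A) := inferInstanceAs (Module k (Module.End k A × A))

instance : Bracket (Sd k A) (Sd k A) :=
  ⟨fun x y => (⁅x.1, y.1⁆, x.1 y.2 - y.1 x.2)⟩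

@[simp] lemma fst_add (x y : Sd k A) : (x + y).1 = x.1 + y.1 := rfl
@[simp] lemma snd_add (x y : Sd k A) : (x + y).2 = x.2 + y.2 := rfl
@[simp] lemma fst_smul (t : k) (x : Sd k A) : (t • x).1 = t • x.1 := rfl
@[simp] lemma snd_smul (t : k) (x : Sd k A) : (t • x).2 = t • x.2 := rfl
@[simp] lemma fst_zero : (0 : Sd k A).1 = 0 := rfl
@[simp] lemma snd_zero : (0 : Sd k A).2 = 0 := rfl
@[simp] lemma fst_bracket (x y : Sd k A) : ⁅x, y⁆.1 = ⁅x.1, y.1⁆ := rfl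
@[simp] lemma snd_bracket (x y : Sd k A) : ⁅x, y⁆.2 = x.1 y.2 - y.1 x.2 := rfl

lemma sd_ext {x y : Sd k A} (h1 : x.1 = y.1) (h2 : x.2 = y.2) : x = y := Prod.ext h1 h2

instance : LieRing (Sd k A) where
  add_lie x y z := by
    apply sd_ext <;> simp [add_lie]
    abel
  lie_add x y z := by
    apply sd_ext <;> simp [lie_add]
    abel
  lie_self x := by
    apply sd_ext <;> simp
  leibniz_lie x y z := by
    apply sd_ext
    · simp only [fst_bracket, fst_add]
      exact leibniz_lie _ _ _
    · simp only [snd_bracket, fst_bracket, snd_add, Ring.lie_def, LinearMap.sub_apply,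
        Module.End.mul_apply, map_sub]
      abel

instance : LieAlgebra k (Sd k A) where
  lie_smul t x y := by
    apply sd_ext <;> simp [smul_sub]

/-- Projection onto the first factor, as a Lie algebra hom. -/
def sdπ : Sd k A →ₗ⁅k⁆ Sd k A where
  toFun x := (x.1, 0)
  map_add' x y := sd_ext rfl (add_zero (0 : A)).symm
  map_smul' t x := sd_ext rfl (smul_zero t).symm
  map_lie' {x y} := sd_ext rfl (by show (0 : A) = x.1 0 - y.1 0; simp)

@[simp] lemma sdπ_apply (x : Sd k A) : (sdπ x : Sd k A) = (x.1, 0) := rfl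

lemma sdπ_fst (x : Sd k A) : (sdπ x : Sd k A).1 = x.1 := rfl
lemma sdπ_snd (x : Sd k A) : (sdπ x : Sd k A).2 = 0 := rfl

end FreeLeibnizAux

open FreeLeibnizAux in
/-- The submodule `V₂` of `FreeLieAlgebra k (X ⊕ X)` (the closure of the dotted
generators under the two di-algebra operations `a ⊢ b := ⁅φ a, b⁆` and `a ⊣ b := ⁅a, φ b⁆`) is
the free Leibniz algebra on `X`: every map `α : X → A` into a left Leibniz algebra `A` extends
uniquely to a linear map `χ : V₂ → A` respecting the operations. -/
theorem free_leibniz_universal_property (k : Type*) [Field k] (X : Type*)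
    (φ : FreeLieAlgebra k (X ⊕ X) →ₗ⁅k⁆ FreeLieAlgebra k (X ⊕ X))
    (hφl : ∀ x : X, φ (FreeLieAlgebra.of k (Sum.inl x)) = FreeLieAlgebra.of k (Sum.inl x))
    (hφr : ∀ x : X, φ (FreeLieAlgebra.of k (Sum.inr x)) = FreeLieAlgebra.of k (Sum.inl x))
    (V₂ : Submodule k (FreeLieAlgebra k (X ⊕ X)))
    (hV₂ : V₂ = sInf {W : Submodule k (FreeLieAlgebra k (X ⊕ X)) |
        (∀ x : X, FreeLieAlgebra.of k (Sum.inr x) ∈ W) ∧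
        ∀ a b : FreeLieAlgebra k (X ⊕ X), a ∈ W → b ∈ W → ⁅φ a, b⁆ ∈ W ∧ ⁅a, φ b⁆ ∈ W})
    (A : Type*) [AddCommGroup A] [Module k A]
    (p : A →ₗ[k] A →ₗ[k] A)
    (hp_leibniz : ∀ x y z : A, p x (p y z) = p (p x y) z + p y (p x z)) :
    ∀ α : X → A, ∃! χ : V₂ →ₗ[k] A,
      (∀ (x : X) (h : FreeLieAlgebra.of k (Sum.inr x) ∈ V₂), χ ⟨_, h⟩ = α x) ∧
      (∀ (a b : V₂) (h : ⁅φ (a : FreeLieAlgebra k (X ⊕ X)), (b : FreeLieAlgebra k (X ⊕ X))⁆ ∈ V₂),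
        χ ⟨_, h⟩ = p (χ a) (χ b)) ∧
      (∀ (a b : V₂) (h : ⁅(a : FreeLieAlgebra k (X ⊕ X)), φ (b : FreeLieAlgebra k (X ⊕ X))⁆ ∈ V₂),
        χ ⟨_, h⟩ = -p (χ b) (χ a)) := by
  intro α
  classical
  set F := FreeLieAlgebra k (X ⊕ X) with hF
  set S : Set (Submodule k F) := {W : Submodule k F |
        (∀ x : X, FreeLieAlgebra.of k (Sum.inr x) ∈ W) ∧
        ∀ a b : F, a ∈ W → b ∈ W → ⁅φ a, b⁆ ∈ W ∧ ⁅a, φ b⁆ ∈ W} with hS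
  -- `V₂` itself satisfies the generation conditions
  have hV₂gen : ∀ x : X, FreeLieAlgebra.of k (Sum.inr x) ∈ V₂ := by
    intro x
    rw [hV₂]
    exact Submodule.mem_sInf.2 fun W hW => hW.1 x
  have hV₂cl : ∀ a b : F, a ∈ V₂ → b ∈ V₂ → ⁅φ a, b⁆ ∈ V₂ ∧ ⁅a, φ b⁆ ∈ V₂ := by
    intro a b ha hb
    rw [hV₂] at ha hb ⊢
    constructor
    · exact Submodule.mem_sInf.2 fun W hW =>
        (hW.2 a b (Submodule.mem_sInf.1 ha W hW) (Submodule.mem_sInf.1 hb W hW)).1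
    · exact Submodule.mem_sInf.2 fun W hW =>
        (hW.2 a b (Submodule.mem_sInf.1 ha W hW) (Submodule.mem_sInf.1 hb W hW)).2
  have hV₂le : ∀ W : Submodule k F, W ∈ S → V₂ ≤ W := by
    intro W hW
    rw [hV₂]
    exact sInf_le hW
  -- p as a map to gl(A) intertwines ⊢ with the commutator
  have hpbr : ∀ x y : A, p (p x y) = ⁅p x, p y⁆ := by
    intro x y
    ext z
    simp only [Ring.lie_def, LinearMap.sub_apply, Module.End.mul_apply]
    rw [eq_sub_iff_add_eq]
    exact (hp_leibniz x y z).symm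
  -- the universal map into the semidirect product
  set Φ : F →ₗ⁅k⁆ Sd k A := FreeLieAlgebra.lift k
    (fun s : X ⊕ X => Sum.casesOn s (fun x => ((p (α x), 0) : Sd k A))
      (fun x => ((p (α x), α x) : Sd k A))) with hΦ
  have hΦl : ∀ x : X, Φ (FreeLieAlgebra.of k (Sum.inl x)) = (p (α x), 0) := fun x =>
    FreeLieAlgebra.lift_of_apply _ _
  have hΦr : ∀ x : X, Φ (FreeLieAlgebra.of k (Sum.inr x)) = (p (α x), α x) := fun x =>
    FreeLieAlgebra.lift_of_apply _ _
  -- Φ ∘ φ = π ∘ Φ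
  have hcomm : ∀ v : F, Φ (φ v) = sdπ (Φ v) := by
    have : Φ.comp φ = (sdπ : Sd k A →ₗ⁅k⁆ Sd k A).comp Φ := by
      have h1 : Φ.comp φ = FreeLieAlgebra.lift k ((Φ.comp φ) ∘ FreeLieAlgebra.of k) :=
        (FreeLieAlgebra.lift_comp_of (Φ.comp φ)).symm
      have h2 : (sdπ : Sd k A →ₗ⁅k⁆ Sd k A).comp Φ =
          FreeLieAlgebra.lift k ((((sdπ : Sd k A →ₗ⁅k⁆ Sd k A).comp Φ)) ∘ FreeLieAlgebra.of k) :=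
        (FreeLieAlgebra.lift_comp_of _).symm
      rw [h1, h2]
      congr 1
      funext s
      cases s with
      | inl x =>
        simp only [Function.comp_apply, LieHom.comp_apply, hφl, hΦl, sdπ_apply]
        rfl
      | inr x =>
        simp only [Function.comp_apply, LieHom.comp_apply, hφr, hΦl, hΦr, sdπ_apply]
        rfl
    intro v
    have := congrArg (fun f : F →ₗ⁅k⁆ Sd k A => f v) this
    simpa using this
  -- On V₂, the first component of Φ is p of the second component
  set W₀ : Submodule k F := LinearMap.ker
    ((LinearMap.fst k (Module.End k A) A - p.comp (LinearMap.snd k (Module.End k A) A)).comp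
      (Φ.toLinearMap : F →ₗ[k] Sd k A)) with hW₀
  have hW₀mem : ∀ v : F, v ∈ W₀ ↔ (Φ v).1 = p ((Φ v).2) := by
    intro v
    rw [hW₀, LinearMap.mem_ker]
    constructor
    · intro h
      have h' : (Φ v).1 - p ((Φ v).2) = 0 := h
      exact sub_eq_zero.1 h'
    · intro h
      show (Φ v).1 - p ((Φ v).2) = 0
      rw [h, sub_self]
  have hW₀S : W₀ ∈ S := by
    constructor
    · intro x
      rw [hW₀mem, hΦr x]
    · intro a b ha hb
      rw [hW₀mem] at ha hb
      constructor
      · rw [hW₀mem, Φ.map_lie, hcomm]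
        simp only [fst_bracket, snd_bracket, sdπ_fst, sdπ_snd, map_zero, sub_zero]
        rw [ha, hb, ← hpbr]
      · rw [hW₀mem, Φ.map_lie, hcomm b]
        simp only [fst_bracket, snd_bracket, sdπ_fst, sdπ_snd, map_zero, zero_sub, map_neg]
        rw [ha, hb]
        ext z
        simp only [Ring.lie_def, LinearMap.sub_apply, Module.End.mul_apply,
          LinearMap.neg_apply]
        rw [hp_leibniz ((Φ b).2) ((Φ a).2) z]
        abel
  have hV₂W₀ : V₂ ≤ W₀ := hV₂le _ hW₀S
  -- the candidate map
  set χ : V₂ →ₗ[k] A :=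
    (LinearMap.snd k (Module.End k A) A).comp
      ((Φ.toLinearMap : F →ₗ[k] Sd k A).comp V₂.subtype) with hχ
  have hχdef : ∀ v : V₂, χ v = (Φ (v : F)).2 := fun v => rfl
  have hfst : ∀ v : V₂, (Φ (v : F)).1 = p (χ v) := by
    intro v
    rw [hχdef]
    exact (hW₀mem _).1 (hV₂W₀ v.2)
  have hprop1 : ∀ (x : X) (h : FreeLieAlgebra.of k (Sum.inr x) ∈ V₂),
      χ ⟨_, h⟩ = α x := by
    intro x h
    rw [hχdef]
    simp [hΦr x]
  have hprop2 : ∀ (a b : V₂) (h : ⁅φ (a : F), (b : F)⁆ ∈ V₂),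
      χ ⟨_, h⟩ = p (χ a) (χ b) := by
    intro a b h
    rw [hχdef]
    show (Φ ⁅φ (a : F), (b : F)⁆).2 = _
    rw [Φ.map_lie, hcomm, snd_bracket, sdπ_apply, hfst a]
    simp [hχdef]
  have hprop3 : ∀ (a b : V₂) (h : ⁅(a : F), φ (b : F)⁆ ∈ V₂),
      χ ⟨_, h⟩ = -p (χ b) (χ a) := by
    intro a b h
    rw [hχdef]
    show (Φ ⁅(a : F), φ (b : F)⁆).2 = _
    rw [Φ.map_lie, hcomm b, snd_bracket, sdπ_apply, hfst b]
    simp [hχdef]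
  refine ⟨χ, ⟨hprop1, hprop2, hprop3⟩, ?_⟩
  -- uniqueness
  rintro χ' ⟨h1, h2, h3⟩
  set W₁ : Submodule k F := Submodule.map V₂.subtype (LinearMap.ker (χ' - χ)) with hW₁
  have hW₁mem : ∀ v : F, v ∈ W₁ ↔ ∃ h : v ∈ V₂, χ' ⟨v, h⟩ = χ ⟨v, h⟩ := by
    intro v
    rw [hW₁]
    constructor
    · rintro ⟨⟨w, hw⟩, hker, rfl⟩
      refine ⟨hw, ?_⟩
      have : (χ' - χ) ⟨w, hw⟩ = 0 := hker
      have := sub_eq_zero.1 this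
      exact this
    · rintro ⟨h, he⟩
      exact ⟨⟨v, h⟩, by simpa [LinearMap.mem_ker, sub_eq_zero] using he, rfl⟩
  have hW₁S : W₁ ∈ S := by
    constructor
    · intro x
      rw [hW₁mem]
      exact ⟨hV₂gen x, by rw [h1 x, hprop1 x]⟩
    · intro a b ha hb
      rw [hW₁mem] at ha hb
      obtain ⟨haV, hae⟩ := ha
      obtain ⟨hbV, hbe⟩ := hb
      have hbr := hV₂cl a b haV hbV
      constructor
      · rw [hW₁mem]
        refine ⟨hbr.1, ?_⟩
        rw [h2 ⟨a, haV⟩ ⟨b, hbV⟩ hbr.1, hprop2 ⟨a, haV⟩ ⟨b, hbV⟩ hbr.1, hae, hbe]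
      · rw [hW₁mem]
        refine ⟨hbr.2, ?_⟩
        rw [h3 ⟨a, haV⟩ ⟨b, hbV⟩ hbr.2, hprop3 ⟨a, haV⟩ ⟨b, hbV⟩ hbr.2, hae, hbe]
  have hV₂W₁ : V₂ ≤ W₁ := hV₂le _ hW₁S
  ext v
  obtain ⟨h, he⟩ := (hW₁mem (v : F)).1 (hV₂W₁ v.2)
  have : (⟨(v : F), h⟩ : V₂) = v := Subtype.ext rfl
  rw [this] at he
  exact he
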